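/- Let n ≥ s ≥ r ≥ 3 be integers. For real x with (s−2)n²/(2(s−1)) < x < (s−1)n²/(2s), define p(x) = (1/s)(n + √(n² − 2sx/(s−1))), q(x) = (1/s)(n − (s−1)√(n² − 2sx/(s−1))), and f(x) = C(s−1, r) p(x)^r + C(s−1, r−1) p(x)^{r−1} q(x). Then f is differentiable at every such x with derivative f′(x) = C(s−2, r−2) · p(x)^{r−2}. -/

import Mathlib

set_option maxHeartbeats 1000000


/-- `p(x) = (1/s)(n + √(n² - 2sx/(s-1)))`. -/
noncomputable def pfun (n s : ℕ) (x : ℝ) : ℝ :=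
  (1 / (s : ℝ)) * ((n : ℝ) + Real.sqrt ((n : ℝ) ^ 2 - 2 * (s : ℝ) * x / ((s : ℝ) - 1)))

/-- `q(x) = (1/s)(n - (s-1)√(n² - 2sx/(s-1)))`. -/
noncomputable def qfun (n s : ℕ) (x : ℝ) : ℝ :=
  (1 / (s : ℝ)) * ((n : ℝ) - ((s : ℝ) - 1) * Real.sqrt ((n : ℝ) ^ 2 - 2 * (s : ℝ) * x / ((s : ℝ) - 1)))

/-- `f(x) = C(s-1, r) p(x)^r + C(s-1, r-1) p(x)^{r-1} q(x)`. -/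
noncomputable def ffun (n s r : ℕ) (x : ℝ) : ℝ :=
  ((s - 1).choose r : ℝ) * pfun n s x ^ r +
    ((s - 1).choose (r - 1) : ℝ) * pfun n s x ^ (r - 1) * qfun n s x

theorem f_deriv (n s r : ℕ) (hr : 3 ≤ r) (hrs : r ≤ s) (hsn : s ≤ n) (x : ℝ)
    (hx1 : ((s : ℝ) - 2) * (n : ℝ) ^ 2 / (2 * ((s : ℝ) - 1)) < x)
    (hx2 : x < ((s : ℝ) - 1) * (n : ℝ) ^ 2 / (2 * (s : ℝ))) :
    HasDerivAt (ffun n s r) (((s - 2).choose (r - 2) : ℝ) * pfun n s x ^ (r - 2)) x := by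
  obtain ⟨k, rfl⟩ : ∃ k, r = k + 3 := ⟨r - 3, by omega⟩
  obtain ⟨j, rfl⟩ : ∃ j, s = j + 3 := ⟨s - 3, by omega⟩
  have hk : k ≤ j := by omega
  have hj0 : (0:ℝ) ≤ (j : ℝ) := Nat.cast_nonneg j
  have hS : ((j+3 : ℕ) : ℝ) = (j : ℝ) + 3 := by push_cast; ring
  have hS0 : (0:ℝ) < ((j+3 : ℕ) : ℝ) := by rw [hS]; linarith
  have hS1 : (0:ℝ) < ((j+3 : ℕ) : ℝ) - 1 := by rw [hS]; linarith
  have hu : 0 < (n:ℝ)^2 - 2*((j+3 : ℕ) : ℝ)*x/(((j+3 : ℕ) : ℝ) - 1) := by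
    rw [sub_pos, div_lt_iff₀ hS1]
    rw [lt_div_iff₀ (by linarith : (0:ℝ) < 2*((j+3 : ℕ) : ℝ))] at hx2
    nlinarith
  have hT0 : 0 < Real.sqrt ((n:ℝ)^2 - 2*((j+3 : ℕ) : ℝ)*x/(((j+3 : ℕ) : ℝ) - 1)) :=
    Real.sqrt_pos.mpr hu
  have hd_inner : HasDerivAt (fun y : ℝ => (n:ℝ)^2 - 2*((j+3 : ℕ) : ℝ)*y/(((j+3 : ℕ) : ℝ)-1))
      (-(2*((j+3 : ℕ) : ℝ)/(((j+3 : ℕ) : ℝ)-1))) x := by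
    simpa [Pi.sub_def] using (hasDerivAt_const x ((n:ℝ)^2)).sub
      (((hasDerivAt_id x).const_mul (2*((j+3 : ℕ) : ℝ))).div_const (((j+3 : ℕ) : ℝ)-1))
  have hd_T : HasDerivAt (fun y => Real.sqrt ((n:ℝ)^2 - 2*((j+3 : ℕ) : ℝ)*y/(((j+3 : ℕ) : ℝ)-1)))
      (-(2*((j+3 : ℕ) : ℝ)/(((j+3 : ℕ) : ℝ)-1)) /
        (2 * Real.sqrt ((n:ℝ)^2 - 2*((j+3 : ℕ) : ℝ)*x/(((j+3 : ℕ) : ℝ) - 1)))) x :=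
    hd_inner.sqrt hu.ne'
  set T := Real.sqrt ((n:ℝ)^2 - 2*((j+3 : ℕ) : ℝ)*x/(((j+3 : ℕ) : ℝ) - 1)) with hT_def
  have hd_p : HasDerivAt (pfun n (j+3))
      ((1/((j+3 : ℕ) : ℝ)) * (0 + -(2*((j+3 : ℕ) : ℝ)/(((j+3 : ℕ) : ℝ)-1)) / (2*T))) x := by
    unfold pfun
    exact HasDerivAt.const_mul _ ((hasDerivAt_const x ((n:ℕ):ℝ)).add hd_T)
  have hd_q : HasDerivAt (qfun n (j+3))
      ((1/((j+3 : ℕ) : ℝ)) * (0 - (((j+3 : ℕ) : ℝ)-1) *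
        (-(2*((j+3 : ℕ) : ℝ)/(((j+3 : ℕ) : ℝ)-1)) / (2*T)))) x := by
    unfold qfun
    exact HasDerivAt.const_mul _ ((hasDerivAt_const x ((n:ℕ):ℝ)).sub
      (HasDerivAt.const_mul _ hd_T))
  have hd_f := (HasDerivAt.const_mul (((j+2).choose (k+3) : ℕ) : ℝ) (hd_p.pow (n := k+3))).add
    ((HasDerivAt.const_mul (((j+2).choose (k+2) : ℕ) : ℝ) (hd_p.pow (n := k+2))).mul hd_q)
  have hgoal : HasDerivAt (ffun n (j+3) (k+3))
      (((j+1).choose (k+1) : ℝ) * pfun n (j+3) x ^ (k+1)) x := by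
    convert hd_f using 1
    · rfl
    · rfl
    · rfl
    have H1 : (((j+2).choose (k+3) : ℕ) : ℝ) * ((k:ℝ)+3)
        = (((j+2).choose (k+2) : ℕ) : ℝ) * ((j:ℝ) - (k:ℝ)) := by
      have h := Nat.choose_succ_right_eq (j+2) (k+2)
      have h2 : j+2 - (k+2) = j - k := by omega
      rw [h2] at h
      have := congrArg (fun m : ℕ => (m : ℝ)) h
      push_cast [Nat.cast_sub hk] at this
      linarith [this]
    have H2 : ((j:ℝ)+2) * (((j+1).choose (k+1) : ℕ) : ℝ)
        = (((j+2).choose (k+2) : ℕ) : ℝ) * ((k:ℝ)+2) := by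
      have h := Nat.add_one_mul_choose_eq (j+1) (k+1)
      have := congrArg (fun m : ℕ => (m : ℝ)) h
      push_cast at this
      linarith [this]
    have hc1 : (((j+2).choose (k+3) : ℕ) : ℝ)
        = (((j+2).choose (k+2) : ℕ) : ℝ) * ((j:ℝ) - (k:ℝ)) / ((k:ℝ)+3) := by
      rw [eq_div_iff (by positivity)]; linarith [H1]
    have hc3 : (((j+1).choose (k+1) : ℕ) : ℝ)
        = (((j+2).choose (k+2) : ℕ) : ℝ) * ((k:ℝ)+2) / ((j:ℝ)+2) := by
      rw [eq_div_iff (by positivity)]; linarith [H2]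
    set P := pfun n (j+3) x with hP_def
    set Q := qfun n (j+3) x with hQ_def
    have hp : P = (1/((j:ℝ)+3)) * ((n:ℝ) + T) := by
      rw [hP_def]; unfold pfun; rw [← hT_def, hS]
    have hq : Q = (1/((j:ℝ)+3)) * ((n:ℝ) - (((j:ℝ)+3)-1) * T) := by
      rw [hQ_def]; unfold qfun; rw [← hT_def, hS]
    have hT0' : T ≠ 0 := hT0.ne'
    have h1 : (j:ℝ) + 3 ≠ 0 := by positivity
    have h2 : (j:ℝ) + 2 ≠ 0 := by positivity
    have h4 : (k:ℝ) + 3 ≠ 0 := by positivity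
    have key : (((j+2).choose (k+3) : ℕ) : ℝ) * (((k:ℝ)+3) * P *
          (1/((j:ℝ)+3) * (0 + -(2*((j:ℝ)+3)/(((j:ℝ)+3)-1)) / (2*T))))
        + ((((j+2).choose (k+2) : ℕ) : ℝ) * (((k:ℝ)+2) *
            (1/((j:ℝ)+3) * (0 + -(2*((j:ℝ)+3)/(((j:ℝ)+3)-1)) / (2*T)))) * Q
          + (((j+2).choose (k+2) : ℕ) : ℝ) * P *
            (1/((j:ℝ)+3) * (0 - (((j:ℝ)+3)-1) * (-(2*((j:ℝ)+3)/(((j:ℝ)+3)-1)) / (2*T)))))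
        = (((j+1).choose (k+1) : ℕ) : ℝ) := by
      rw [hp, hq, hc1, hc3]
      have h3 : ((j:ℝ) + 3) - 1 ≠ 0 := by
        intro h; have : (j:ℝ) + 2 = 0 := by linarith
        exact h2 this
      field_simp
      ring
    push_cast [hS]
    simp only [Pi.pow_apply, ← hP_def]
    linear_combination key * (-(P ^ (k+1)))
  convert hgoal using 2 <;> simp
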